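/- Suppose there exist a, b ∈ F_q such that X^{2n} - aX - b is irreducible in F_q[X]. Then the number of nonsingular n×n Toeplitz matrices over F_q equals q^{2n-1} - q^{2n-2}. -/

import Mathlib

open Polynomial

namespace St17

noncomputable section

variable {F : Type*} [Field F] [Fintype F] [DecidableEq F]

/-- polynomials of degree < m -/
abbrev DegLT (F : Type*) [Field F] (m : ℕ) : Type _ := {u : F[X] // u.degree < (m : ℕ)}

def degLTEquiv (m : ℕ) : DegLT F m ≃ (Fin m → F) :=
  (Equiv.subtypeEquivRight (fun _ => (Polynomial.mem_degreeLT).symm)).trans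
    (Polynomial.degreeLTEquiv F m).toEquiv

instance (m : ℕ) : Finite (DegLT F m) := Finite.of_equiv _ (degLTEquiv m).symm

lemma card_DegLT (m : ℕ) : Nat.card (DegLT F m) = Fintype.card F ^ m := by
  rw [Nat.card_congr (degLTEquiv m), Nat.card_eq_fintype_card, Fintype.card_fun,
    Fintype.card_fin]

/-- pairs (r, p) with p monic, both of degree < m -/
abbrev Big (F : Type*) [Field F] (m : ℕ) : Type _ :=
  {rp : F[X] × F[X] // rp.2.Monic ∧ rp.2.degree < (m : ℕ) ∧ rp.1.degree < (m : ℕ)}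

/-- coprime such pairs -/
abbrev Cop (F : Type*) [Field F] (m : ℕ) : Type _ :=
  {rp : F[X] × F[X] // rp.2.Monic ∧ rp.2.degree < (m : ℕ) ∧ rp.1.degree < (m : ℕ) ∧
    IsCoprime rp.1 rp.2}

/-- monic polynomials of degree exactly e -/
abbrev Mon (F : Type*) [Field F] (e : ℕ) : Type _ := {g : F[X] // g.Monic ∧ g.natDegree = e}

/-- monic polynomials of degree < m -/
abbrev MonLT (F : Type*) [Field F] (m : ℕ) : Type _ :=
  {g : F[X] // g.Monic ∧ g.degree < (m : ℕ)}

def monEquiv (e : ℕ) : Mon F e ≃ DegLT F e where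
  toFun g := ⟨g.1 - X ^ e, by
    have hd : g.1.degree = ((e : ℕ) : WithBot ℕ) := by
      conv_lhs => rw [degree_eq_natDegree g.2.1.ne_zero, g.2.2]
    calc (g.1 - X ^ e).degree < g.1.degree := by
          refine degree_sub_lt ?_ ?_ ?_
          · rw [hd, degree_X_pow]
          · exact g.2.1.ne_zero
          · rw [g.2.1.leadingCoeff, monic_X_pow e |>.leadingCoeff]
      _ = _ := hd⟩
  invFun h := ⟨X ^ e + h.1, monic_X_pow_add h.2, by
    have : (X ^ e + h.1 : F[X]).degree = ((e : ℕ) : WithBot ℕ) := by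
      rw [add_comm, degree_add_eq_right_of_degree_lt (by simpa using h.2), degree_X_pow]
    exact natDegree_eq_of_degree_eq_some this⟩
  left_inv := by intro g; ext1; ring
  right_inv := by intro h; ext1; ring

instance (e : ℕ) : Finite (Mon F e) := Finite.of_equiv _ (monEquiv e).symm

lemma card_Mon (e : ℕ) : Nat.card (Mon F e) = Fintype.card F ^ e := by
  rw [Nat.card_congr (monEquiv e), card_DegLT]

end

end St17

namespace St17
noncomputable section
variable {F : Type*} [Field F] [Fintype F] [DecidableEq F]

lemma exists_bezout (r p : F[X]) : ∃ x y, r * x + p * y = gcd r p := by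
  have h1 : EuclideanDomain.gcd r p ∣ gcd r p :=
    dvd_gcd (EuclideanDomain.gcd_dvd_left r p) (EuclideanDomain.gcd_dvd_right r p)
  obtain ⟨c, hc⟩ := h1
  refine ⟨EuclideanDomain.gcdA r p * c, EuclideanDomain.gcdB r p * c, ?_⟩
  rw [hc, EuclideanDomain.gcd_eq_gcd_ab r p]; ring

lemma coprime_div_gcd (r p : F[X]) (h : gcd r p ≠ 0) :
    IsCoprime (r / gcd r p) (p / gcd r p) := by
  obtain ⟨x, y, hxy⟩ := exists_bezout r p
  have hr : gcd r p * (r / gcd r p) = r := EuclideanDomain.mul_div_cancel' h (gcd_dvd_left r p)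
  have hp : gcd r p * (p / gcd r p) = p := EuclideanDomain.mul_div_cancel' h (gcd_dvd_right r p)
  refine ⟨x, y, ?_⟩
  apply mul_left_cancel₀ h
  rw [mul_one]
  calc gcd r p * (x * (r / gcd r p) + y * (p / gcd r p))
      = x * (gcd r p * (r / gcd r p)) + y * (gcd r p * (p / gcd r p)) := by ring
    _ = r * x + p * y := by rw [hr, hp]; ring
    _ = gcd r p := hxy

lemma gcd_mul_coprime {g r' p' : F[X]} (hg : g.Monic) (hcop : IsCoprime r' p') :
    gcd (g * r') (g * p') = g := by
  have h1 : gcd r' p' = 1 := by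
    obtain ⟨a, b, hab⟩ := hcop
    have : gcd r' p' ∣ 1 := hab ▸ dvd_add ((gcd_dvd_left r' p').mul_left a)
      ((gcd_dvd_right r' p').mul_left b)
    rw [← normalize_gcd, normalize_eq_one]
    exact isUnit_of_dvd_one this
  rw [gcd_mul_left, h1, mul_one, hg.normalize_eq_self]

lemma deg_div_lt {g r : F[X]} (hg : g ∣ r) (hg0 : g ≠ 0) {m e : ℕ} (hdr : r.degree < (m : ℕ))
    (hge : g.natDegree = e) : (r / g).degree < ((m - e : ℕ) : WithBot ℕ) := by
  rcases eq_or_ne r 0 with rfl | hr0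
  · rw [EuclideanDomain.zero_div, degree_zero]; exact WithBot.bot_lt_coe _
  · have hmul : g * (r / g) = r := EuclideanDomain.mul_div_cancel' hg0 hg
    have hq0 : r / g ≠ 0 := by
      intro h0; rw [h0, mul_zero] at hmul; exact hr0 hmul.symm
    have hnd : g.natDegree + (r / g).natDegree = r.natDegree := by
      rw [← Polynomial.natDegree_mul hg0 hq0, hmul]
    have hrm : r.natDegree < m := (Polynomial.natDegree_lt_iff_degree_lt hr0).mpr hdr
    rw [← Polynomial.natDegree_lt_iff_degree_lt hq0]
    omega

lemma deg_mul_lt {g r' : F[X]} {m e : ℕ} (hge : g.natDegree = e) (hg0 : g ≠ 0)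
    (hdr' : r'.degree < ((m - e : ℕ) : WithBot ℕ)) (hem : e ≤ m) :
    (g * r').degree < (m : ℕ) := by
  rcases eq_or_ne r' 0 with rfl | hr0
  · rw [mul_zero, degree_zero]; exact WithBot.bot_lt_coe _
  · have h1 : r'.natDegree < m - e := (Polynomial.natDegree_lt_iff_degree_lt hr0).mpr hdr'
    rw [← Polynomial.natDegree_lt_iff_degree_lt (mul_ne_zero hg0 hr0),
      Polynomial.natDegree_mul hg0 hr0]
    omega

def fibEquiv (m e : ℕ) (hem : e < m) :
    {x : Big F m // (gcd x.1.1 x.1.2).natDegree = e} ≃ Mon F e × Cop F (m - e) where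
  toFun x :=
    have hp0 : x.1.1.2 ≠ 0 := x.1.2.1.ne_zero
    have hg0 : gcd x.1.1.1 x.1.1.2 ≠ 0 := fun h => hp0 ((gcd_eq_zero_iff _ _).mp h).2
    have hgm : (gcd x.1.1.1 x.1.1.2).Monic := by
      have := Polynomial.monic_normalize (p := gcd x.1.1.1 x.1.1.2) hg0
      rwa [normalize_gcd] at this
    (⟨gcd x.1.1.1 x.1.1.2, hgm, x.2⟩,
     ⟨(x.1.1.1 / gcd x.1.1.1 x.1.1.2, x.1.1.2 / gcd x.1.1.1 x.1.1.2),
      by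
        have hmul : gcd x.1.1.1 x.1.1.2 * (x.1.1.2 / gcd x.1.1.1 x.1.1.2) = x.1.1.2 :=
          EuclideanDomain.mul_div_cancel' hg0 (gcd_dvd_right _ _)
        exact hgm.of_mul_monic_left (hmul.symm ▸ x.1.2.1),
      deg_div_lt (gcd_dvd_right _ _) hg0 x.1.2.2.1 x.2,
      deg_div_lt (gcd_dvd_left _ _) hg0 x.1.2.2.2 x.2,
      coprime_div_gcd _ _ hg0⟩)
  invFun gc :=
    have hg0 : gc.1.1 ≠ 0 := gc.1.2.1.ne_zero
    ⟨⟨(gc.1.1 * gc.2.1.1, gc.1.1 * gc.2.1.2),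
      gc.1.2.1.mul gc.2.2.1,
      deg_mul_lt gc.1.2.2 hg0 gc.2.2.2.1 hem.le,
      deg_mul_lt gc.1.2.2 hg0 gc.2.2.2.2.1 hem.le⟩,
     by rw [gcd_mul_coprime gc.1.2.1 gc.2.2.2.2.2]; exact gc.1.2.2⟩
  left_inv x := by
    have hp0 : x.1.1.2 ≠ 0 := x.1.2.1.ne_zero
    have hg0 : gcd x.1.1.1 x.1.1.2 ≠ 0 := fun h => hp0 ((gcd_eq_zero_iff _ _).mp h).2
    apply Subtype.ext; apply Subtype.ext
    ext : 1
    · exact EuclideanDomain.mul_div_cancel' hg0 (gcd_dvd_left _ _)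
    · exact EuclideanDomain.mul_div_cancel' hg0 (gcd_dvd_right _ _)
  right_inv gc := by
    have hg0 : gc.1.1 ≠ 0 := gc.1.2.1.ne_zero
    have key : gcd (gc.1.1 * gc.2.1.1) (gc.1.1 * gc.2.1.2) = gc.1.1 :=
      gcd_mul_coprime gc.1.2.1 gc.2.2.2.2.2
    ext : 1
    · exact Subtype.ext key
    · apply Subtype.ext
      ext : 1
      · show gc.1.1 * gc.2.1.1 / gcd (gc.1.1 * gc.2.1.1) (gc.1.1 * gc.2.1.2) = gc.2.1.1
        rw [key, mul_div_cancel_left₀ _ hg0]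
      · show gc.1.1 * gc.2.1.2 / gcd (gc.1.1 * gc.2.1.1) (gc.1.1 * gc.2.1.2) = gc.2.1.2
        rw [key, mul_div_cancel_left₀ _ hg0]

def bigProd (m : ℕ) : Big F m ≃ DegLT F m × MonLT F m where
  toFun x := (⟨x.1.1, x.2.2.2⟩, ⟨x.1.2, x.2.1, x.2.2.1⟩)
  invFun y := ⟨(y.1.1, y.2.1), y.2.2.1, y.2.2.2, y.1.2⟩
  left_inv x := rfl
  right_inv y := rfl

instance (m : ℕ) : Finite (MonLT F m) :=
  Finite.of_injective (fun g => (⟨g.1, g.2.2⟩ : DegLT F m))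
    (fun a b h => Subtype.ext (Subtype.mk_eq_mk.mp h))

instance (m : ℕ) : Finite (Big F m) := Finite.of_equiv _ (bigProd m).symm

instance (m : ℕ) : Finite (Cop F m) :=
  Finite.of_injective (fun x => (⟨x.1, x.2.1, x.2.2.1, x.2.2.2.1⟩ : Big F m))
    (fun a b h => Subtype.ext (Subtype.mk_eq_mk.mp h))

lemma natCard_sigma {m : ℕ} (f : Fin m → Type*) [∀ i, Finite (f i)] :
    Nat.card (Σ i, f i) = ∑ i, Nat.card (f i) := by
  letI := fun i => Fintype.ofFinite (f i)
  simp only [Nat.card_eq_fintype_card, Fintype.card_sigma]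

lemma natDegree_lt_of_degree_lt {p : F[X]} {m : ℕ} (hp : p.Monic) (h : p.degree < (m : ℕ)) :
    p.natDegree < m :=
  (Polynomial.natDegree_lt_iff_degree_lt hp.ne_zero).mpr h

def monLTSigma (m : ℕ) : MonLT F m ≃ Σ e : Fin m, Mon F e :=
  ((Equiv.sigmaFiberEquiv (fun g : MonLT F m =>
      (⟨g.1.natDegree, natDegree_lt_of_degree_lt g.2.1 g.2.2⟩ : Fin m))).symm).trans
    (Equiv.sigmaCongrRight fun e =>
      { toFun := fun g => ⟨g.1.1, g.1.2.1, congrArg Fin.val g.2⟩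
        invFun := fun h => ⟨⟨h.1, h.2.1, by
            rw [← Polynomial.natDegree_lt_iff_degree_lt h.2.1.ne_zero, h.2.2]; exact e.2⟩,
          Fin.ext h.2.2⟩
        left_inv := fun g => by apply Subtype.ext; apply Subtype.ext; rfl
        right_inv := fun h => by apply Subtype.ext; rfl })

lemma card_MonLT (m : ℕ) : Nat.card (MonLT F m) = ∑ e ∈ Finset.range m, Fintype.card F ^ e := by
  rw [Nat.card_congr (monLTSigma m), natCard_sigma]
  rw [← Fin.sum_univ_eq_sum_range (fun e => Fintype.card F ^ e) m]
  exact Finset.sum_congr rfl fun e _ => card_Mon e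

def bigSigma (m : ℕ) : Big F m ≃ Σ e : Fin m, Mon F (e : ℕ) × Cop F (m - e) :=
  ((Equiv.sigmaFiberEquiv (fun x : Big F m =>
      (⟨(gcd x.1.1 x.1.2).natDegree, by
        have hp0 : x.1.2 ≠ 0 := x.2.1.ne_zero
        have h1 : (gcd x.1.1 x.1.2).natDegree ≤ x.1.2.natDegree :=
          Polynomial.natDegree_le_of_dvd (gcd_dvd_right _ _) hp0
        exact lt_of_le_of_lt h1 (natDegree_lt_of_degree_lt x.2.1 x.2.2.1)⟩ : Fin m))).symm).trans
    (Equiv.sigmaCongrRight fun e =>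
      ((Equiv.subtypeEquivRight (fun x => by
          simpa using (Fin.ext_iff (a := ⟨(gcd x.1.1 x.1.2).natDegree, _⟩) (b := e))) ).trans
        (fibEquiv m e e.2)))

lemma card_Big_sum (m : ℕ) :
    ∑ e ∈ Finset.range m, Fintype.card F ^ e * Nat.card (Cop F (m - e)) =
      Fintype.card F ^ m * ∑ e ∈ Finset.range m, Fintype.card F ^ e := by
  have h1 : Nat.card (Big F m) = Fintype.card F ^ m * ∑ e ∈ Finset.range m, Fintype.card F ^ e := by
    rw [Nat.card_congr (bigProd m), Nat.card_prod, card_DegLT, card_MonLT]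
  have h2 : Nat.card (Big F m)
      = ∑ e ∈ Finset.range m, Fintype.card F ^ e * Nat.card (Cop F (m - e)) := by
    rw [Nat.card_congr (bigSigma m), natCard_sigma]
    rw [← Fin.sum_univ_eq_sum_range (fun e => Fintype.card F ^ e * Nat.card (Cop F (m - e))) m]
    exact Finset.sum_congr rfl fun e _ => by rw [Nat.card_prod, card_Mon]
  rw [← h1, ← h2]

theorem card_Cop : ∀ m : ℕ, 0 < m → Nat.card (Cop F m) = Fintype.card F ^ (2 * m - 1) := by
  intro m
  induction m using Nat.strong_induction_on with
  | _ m IH =>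
    intro hm
    set q := Fintype.card F with hq
    rcases m with _ | k
    · omega
    have h1 := card_Big_sum (F := F) (k + 1)
    rw [Finset.sum_range_succ' (fun e => q ^ e * Nat.card (Cop F (k + 1 - e))) k] at h1
    have h2 : ∑ e ∈ Finset.range k, q ^ (e + 1) * Nat.card (Cop F (k + 1 - (e + 1)))
        = ∑ e ∈ Finset.range k, q ^ (k + 1 + e) := by
      rw [← Finset.sum_range_reflect (fun e => q ^ (k + 1 + e)) k]
      refine Finset.sum_congr rfl fun e he => ?_
      rw [Finset.mem_range] at he
      have : k + 1 - (e + 1) = k - e := by omega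
      rw [this, IH (k - e) (by omega) (by omega), ← pow_add]
      congr 1
      omega
    have h3 : q ^ (k + 1) * ∑ e ∈ Finset.range (k + 1), q ^ e
        = ∑ e ∈ Finset.range k, q ^ (k + 1 + e) + q ^ (k + 1 + k) := by
      rw [Finset.mul_sum, ← Finset.sum_range_succ (fun e => q ^ (k + 1 + e)) k]
      exact Finset.sum_congr rfl fun e _ => (pow_add q (k+1) e).symm
    rw [← hq, h2, h3] at h1
    simp only [pow_zero, one_mul, Nat.sub_zero] at h1
    have h4 : 2 * (k + 1) - 1 = k + 1 + k := by omega
    rw [h4]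
    omega

/-- the singularity predicate on symbols -/
def Sing (n : ℕ) (u : F[X]) : Prop :=
  ∃ p : F[X], p ≠ 0 ∧ p.degree < (n : ℕ) ∧ ∀ k, n ≤ k → k < 2 * n → (u * p).coeff k = 0

/-- u is congruent to a reduced fraction r/p mod f with both degrees < n -/
def Frac (n : ℕ) (f u : F[X]) : Prop :=
  ∃ r p : F[X], p.Monic ∧ p.degree < (n : ℕ) ∧ r.degree < (n : ℕ) ∧ IsCoprime r p ∧
    f ∣ (u * p - r)

lemma deg_mul_lt'' {u p : F[X]} {A B : ℕ} (hu : u.degree < (A : ℕ)) (hp : p.degree < (B : ℕ))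
    (hA : 0 < A) (hB : 0 < B) : (u * p).degree < ((A + B - 1 : ℕ) : WithBot ℕ) := by
  rcases eq_or_ne u 0 with rfl | hu0
  · rw [zero_mul, degree_zero]; exact WithBot.bot_lt_coe _
  rcases eq_or_ne p 0 with rfl | hp0
  · rw [mul_zero, degree_zero]; exact WithBot.bot_lt_coe _
  rw [← Polynomial.natDegree_lt_iff_degree_lt (mul_ne_zero hu0 hp0),
    Polynomial.natDegree_mul hu0 hp0]
  have h1 : u.natDegree < A := (Polynomial.natDegree_lt_iff_degree_lt hu0).mpr hu
  have h2 : p.natDegree < B := (Polynomial.natDegree_lt_iff_degree_lt hp0).mpr hp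
  omega

section Trinomial

variable {n : ℕ} {a b : F}

lemma lin_deg_le : (C a * X + C b : F[X]).degree ≤ 1 := Polynomial.degree_linear_le

lemma lin_degree_lt2 (hn : 0 < n) : (C a * X + C b : F[X]).degree < ((2 * n : ℕ) : WithBot ℕ) :=
  lt_of_le_of_lt lin_deg_le (by exact_mod_cast (show (1 : ℕ) < 2 * n by omega))

lemma f_eq : (X ^ (2 * n) - C a * X - C b : F[X]) = X ^ (2 * n) - (C a * X + C b) := by ring

lemma f_monic (hn : 0 < n) : (X ^ (2 * n) - C a * X - C b : F[X]).Monic := by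
  rw [f_eq]; exact Polynomial.monic_X_pow_sub (lin_degree_lt2 hn)

lemma f_degree (hn : 0 < n) :
    (X ^ (2 * n) - C a * X - C b : F[X]).degree = ((2 * n : ℕ) : WithBot ℕ) := by
  rw [f_eq, sub_eq_add_neg, Polynomial.degree_add_eq_left_of_degree_lt, Polynomial.degree_X_pow]
  rw [Polynomial.degree_neg, Polynomial.degree_X_pow]
  exact lin_degree_lt2 hn

lemma f_natDegree (hn : 0 < n) :
    (X ^ (2 * n) - C a * X - C b : F[X]).natDegree = 2 * n :=
  Polynomial.natDegree_eq_of_degree_eq_some (f_degree hn)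

lemma coeff_f_mul (hn : 0 < n) (g : F[X])
    (hgd : ((X ^ (2 * n) - C a * X - C b : F[X]) * g).degree < ((3 * n - 1 : ℕ) : WithBot ℕ)) :
    ∀ k, n ≤ k → k < 2 * n → ((X ^ (2 * n) - C a * X - C b : F[X]) * g).coeff k = 0 := by
  intro k hk1 hk2
  rcases eq_or_ne g 0 with rfl | hg0
  · simp
  have hf0 : (X ^ (2 * n) - C a * X - C b : F[X]) ≠ 0 := (f_monic hn).ne_zero
  have hnd : (2 * n) + g.natDegree < 3 * n - 1 := by
    have := (Polynomial.natDegree_lt_iff_degree_lt (mul_ne_zero hf0 hg0)).mpr hgd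
    rwa [Polynomial.natDegree_mul hf0 hg0, f_natDegree hn] at this
  have h2 : g.degree = (g.natDegree : WithBot ℕ) := Polynomial.degree_eq_natDegree hg0
  have hg2 : (C a * X + C b : F[X]).degree + g.degree < (n : ℕ) := by
    calc (C a * X + C b : F[X]).degree + g.degree ≤ 1 + (g.natDegree : WithBot ℕ) := by
          rw [h2]; exact add_le_add lin_deg_le le_rfl
      _ = ((1 + g.natDegree : ℕ) : WithBot ℕ) := by push_cast; rfl
      _ < (n : ℕ) := by exact_mod_cast (show 1 + g.natDegree < n by omega)
  have hlt : ((C a * X + C b : F[X]) * g).degree < (k : ℕ) :=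
    lt_of_lt_of_le (lt_of_le_of_lt (Polynomial.degree_mul_le _ _) hg2)
      (by exact_mod_cast hk1)
  have hkey : (X ^ (2 * n) - C a * X - C b : F[X]) * g
      = g * X ^ (2 * n) - (C a * X + C b) * g := by ring
  rw [hkey, Polynomial.coeff_sub, Polynomial.coeff_mul_X_pow', if_neg (by omega),
    Polynomial.coeff_eq_zero_of_degree_lt hlt, zero_sub, neg_zero]

theorem frac_to_sing (hn : 0 < n) {f : F[X]}
    (hcf : ∀ g : F[X], (f * g).degree < ((3 * n - 1 : ℕ) : WithBot ℕ) →
      ∀ k, n ≤ k → k < 2 * n → (f * g).coeff k = 0)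
    {u : F[X]} (hu : u.degree < ((2 * n : ℕ) : WithBot ℕ))
    (h : Frac n f u) : Sing n u := by
  obtain ⟨r, p, hpm, hdp, hdr, hcop, g, hg⟩ := h
  refine ⟨p, hpm.ne_zero, hdp, fun k hk1 hk2 => ?_⟩
  have hup : (u * p).degree < ((3 * n - 1 : ℕ) : WithBot ℕ) := by
    have := deg_mul_lt'' hu hdp (by omega) hn
    exact lt_of_lt_of_le this (by exact_mod_cast (show 2 * n + n - 1 ≤ 3 * n - 1 by omega))
  have hfg : (f * g).degree < ((3 * n - 1 : ℕ) : WithBot ℕ) := by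
    rw [← hg]
    refine lt_of_le_of_lt (Polynomial.degree_sub_le _ _) (max_lt hup ?_)
    exact lt_of_lt_of_le hdr (by exact_mod_cast (show n ≤ 3 * n - 1 by omega))
  have hupe : u * p = f * g + r := by linear_combination hg
  rw [hupe, Polynomial.coeff_add, hcf g hfg k hk1 hk2, zero_add]
  exact Polynomial.coeff_eq_zero_of_degree_lt
    (lt_of_lt_of_le hdr (by exact_mod_cast hk1))

theorem sing_to_frac (hn : 0 < n) {f : F[X]} (hf : Irreducible f) (hfm : f.Monic)
    (hfd : f.degree = ((2 * n : ℕ) : WithBot ℕ))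
    (hcf : ∀ g : F[X], (f * g).degree < ((3 * n - 1 : ℕ) : WithBot ℕ) →
      ∀ k, n ≤ k → k < 2 * n → (f * g).coeff k = 0)
    {u : F[X]} (hu : u.degree < ((2 * n : ℕ) : WithBot ℕ))
    (h : Sing n u) : Frac n f u := by
  obtain ⟨p, hp0, hdp, hcoef⟩ := h
  have hkey : u * p %ₘ f + f * (u * p /ₘ f) = u * p :=
    Polynomial.modByMonic_add_div (u * p) f
  have hds : (u * p %ₘ f).degree < ((2 * n : ℕ) : WithBot ℕ) := by
    rw [← hfd]; exact Polynomial.degree_modByMonic_lt _ hfm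
  set s : F[X] := u * p %ₘ f with hsdef
  set w : F[X] := u * p /ₘ f with hwdef
  clear_value s w
  clear hsdef hwdef
  have hup : (u * p).degree < ((3 * n - 1 : ℕ) : WithBot ℕ) := by
    have := deg_mul_lt'' hu hdp (by omega) hn
    exact lt_of_lt_of_le this (by exact_mod_cast (show 2 * n + n - 1 ≤ 3 * n - 1 by omega))
  have hfg : (f * w).degree < ((3 * n - 1 : ℕ) : WithBot ℕ) := by
    have heq : f * w = u * p - s := by linear_combination hkey
    rw [heq]
    refine lt_of_le_of_lt (Polynomial.degree_sub_le _ _) (max_lt hup ?_)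
    exact lt_of_lt_of_le hds (by exact_mod_cast (show 2 * n ≤ 3 * n - 1 by omega))
  have hsn : s.degree < (n : ℕ) := by
    rw [Polynomial.degree_lt_iff_coeff_zero]
    intro m hm
    rcases lt_or_ge m (2 * n) with hm2 | hm2
    · have hc2 : s.coeff m + (f * w).coeff m = (u * p).coeff m := by
        rw [← Polynomial.coeff_add, hkey]
      rw [hcoef m (by exact_mod_cast hm) hm2, hcf w hfg m (by exact_mod_cast hm) hm2,
        add_zero] at hc2
      exact hc2
    · exact Polynomial.coeff_eq_zero_of_degree_lt
        (lt_of_lt_of_le hds (by exact_mod_cast hm2))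
  have hdvd : f ∣ u * p - s := ⟨w, by linear_combination -hkey⟩
  rcases eq_or_ne s 0 with hs0 | hs0
  · rw [hs0, sub_zero] at hdvd
    have hprime : Prime f := hf.prime
    have hu0 : u = 0 := by
      rcases hprime.2.2 _ _ hdvd with hfu | hfp
      · by_contra hu0
        have := Polynomial.degree_le_of_dvd hfu hu0
        rw [hfd] at this
        exact absurd (lt_of_le_of_lt this hu) (lt_irrefl _)
      · exfalso
        have := Polynomial.degree_le_of_dvd hfp hp0
        rw [hfd] at this
        have h2n : ((2 * n : ℕ) : WithBot ℕ) < ((2 * n : ℕ) : WithBot ℕ) :=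
          lt_of_le_of_lt (this.trans hdp.le) (by exact_mod_cast (show n < 2 * n by omega))
        exact absurd h2n (lt_irrefl _)
    refine ⟨0, 1, Polynomial.monic_one, ?_, ?_, isCoprime_zero_left.mpr isUnit_one, ?_⟩
    · rw [Polynomial.degree_one]; exact_mod_cast hn
    · rw [Polynomial.degree_zero]; exact WithBot.bot_lt_coe _
    · rw [hu0]; simp
  · have hg0 : gcd s p ≠ 0 := fun hh => hs0 ((gcd_eq_zero_iff _ _).mp hh).1
    have hs1 : gcd s p * (s / gcd s p) = s := EuclideanDomain.mul_div_cancel' hg0 (gcd_dvd_left s p)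
    have hp1 : gcd s p * (p / gcd s p) = p :=
      EuclideanDomain.mul_div_cancel' hg0 (gcd_dvd_right s p)
    have hcop1 : IsCoprime (s / gcd s p) (p / gcd s p) := coprime_div_gcd s p hg0
    have hfg' : IsCoprime f (gcd s p) := by
      rw [hf.coprime_iff_not_dvd]
      intro hdvd'
      have h1 := Polynomial.degree_le_of_dvd hdvd' hg0
      rw [hfd] at h1
      have h2 : (gcd s p).degree ≤ p.degree := Polynomial.degree_le_of_dvd (gcd_dvd_right s p) hp0
      have h3 := lt_of_le_of_lt (h1.trans (h2.trans hdp.le))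
        (show ((n : ℕ) : WithBot ℕ) < ((2 * n : ℕ) : WithBot ℕ) by
          exact_mod_cast (show n < 2 * n by omega))
      exact absurd h3 (lt_irrefl _)
    have hdvd2 : f ∣ u * (p / gcd s p) - s / gcd s p := by
      refine hfg'.dvd_of_dvd_mul_right ?_
      have heq2 : (u * (p / gcd s p) - s / gcd s p) * gcd s p = u * p - s := by
        linear_combination u * hp1 - hs1
      rwa [heq2]
    have hpq0 : p / gcd s p ≠ 0 := fun hh => hp0 (by rw [← hp1, hh, mul_zero])
    have hc0 : (p / gcd s p).leadingCoeff ≠ 0 := Polynomial.leadingCoeff_ne_zero.mpr hpq0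
    have hcu : IsUnit (C (p / gcd s p).leadingCoeff⁻¹ : F[X]) :=
      Polynomial.isUnit_C.mpr (inv_ne_zero hc0).isUnit
    refine ⟨C (p / gcd s p).leadingCoeff⁻¹ * (s / gcd s p),
      C (p / gcd s p).leadingCoeff⁻¹ * (p / gcd s p), ?_, ?_, ?_, ?_, ?_⟩
    · rw [mul_comm]; exact Polynomial.monic_mul_leadingCoeff_inv hpq0
    · refine lt_of_le_of_lt (Polynomial.degree_mul_le _ _) ?_
      refine lt_of_le_of_lt (add_le_add Polynomial.degree_C_le le_rfl) ?_
      rw [zero_add]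
      exact lt_of_le_of_lt (Polynomial.degree_div_le _ _) hdp
    · refine lt_of_le_of_lt (Polynomial.degree_mul_le _ _) ?_
      refine lt_of_le_of_lt (add_le_add Polynomial.degree_C_le le_rfl) ?_
      rw [zero_add]
      exact lt_of_le_of_lt (Polynomial.degree_div_le _ _) hsn
    · exact (isCoprime_mul_unit_left hcu _ _).mpr hcop1
    · have heq : u * (C (p / gcd s p).leadingCoeff⁻¹ * (p / gcd s p))
          - C (p / gcd s p).leadingCoeff⁻¹ * (s / gcd s p)
          = C (p / gcd s p).leadingCoeff⁻¹ * (u * (p / gcd s p) - s / gcd s p) := by ring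
      rw [heq]
      exact hdvd2.mul_left _

/-- symbols of degree < 2n satisfying Frac -/
abbrev FracSet (n : ℕ) (f : F[X]) : Type _ :=
  {u : F[X] // u.degree < ((2 * n : ℕ) : WithBot ℕ) ∧ Frac n f u}

theorem frac_bijective (hn : 0 < n) {f : F[X]} (hf : Irreducible f) (hfm : f.Monic)
    (hfd : f.degree = ((2 * n : ℕ) : WithBot ℕ)) :
    Nat.card (Cop F n) = Nat.card (FracSet n f) := by
  haveI : Fact (Irreducible f) := ⟨hf⟩
  have hfdvd : ∀ p : F[X], p ≠ 0 → p.degree < ((n : ℕ) : WithBot ℕ) → ¬ f ∣ p := by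
    intro p hp0 hdp hdvd
    have h1 := Polynomial.degree_le_of_dvd hdvd hp0
    rw [hfd] at h1
    have := lt_of_le_of_lt (h1.trans hdp.le)
      (show ((n : ℕ) : WithBot ℕ) < ((2 * n : ℕ) : WithBot ℕ) by
        exact_mod_cast (show n < 2 * n by omega))
    exact absurd this (lt_irrefl _)
  have hmk0 : ∀ p : F[X], p ≠ 0 → p.degree < ((n : ℕ) : WithBot ℕ) →
      AdjoinRoot.mk f p ≠ 0 := by
    intro p hp0 hdp h0
    exact hfdvd p hp0 hdp (AdjoinRoot.mk_eq_zero.mp h0)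
  have hdegmod : ∀ z : AdjoinRoot f,
      (AdjoinRoot.modByMonicHom hfm z).degree < ((2 * n : ℕ) : WithBot ℕ) := by
    intro z
    obtain ⟨h, rfl⟩ := AdjoinRoot.mk_surjective z
    rw [AdjoinRoot.modByMonicHom_mk, ← hfd]
    exact Polynomial.degree_modByMonic_lt _ hfm
  refine Nat.card_eq_of_bijective (fun x => (⟨AdjoinRoot.modByMonicHom hfm
      (AdjoinRoot.mk f x.1.1 / AdjoinRoot.mk f x.1.2), hdegmod _, x.1.1, x.1.2,
      x.2.1, x.2.2.1, x.2.2.2.1, x.2.2.2.2, ?_⟩ : FracSet n f)) ⟨?_, ?_⟩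
  · -- f divides Φ * p - r
    rw [← AdjoinRoot.mk_eq_zero, map_sub, map_mul, AdjoinRoot.mk_leftInverse hfm _,
      div_mul_cancel₀ _ (hmk0 _ x.2.1.ne_zero x.2.2.1), sub_self]
  · -- injective
    intro x y hxy
    have hval := congrArg (fun z : FracSet n f => AdjoinRoot.mk f z.1) hxy
    simp only [AdjoinRoot.mk_leftInverse hfm _] at hval
    have hx0 := hmk0 _ x.2.1.ne_zero x.2.2.1
    have hy0 := hmk0 _ y.2.1.ne_zero y.2.2.1
    rw [div_eq_div_iff hx0 hy0, ← map_mul, ← map_mul] at hval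
    have hdvd := (AdjoinRoot.mk_eq_mk).mp hval
    have hdeg : (x.1.1 * y.1.2 - y.1.1 * x.1.2).degree < f.degree := by
      rw [hfd]
      refine lt_of_le_of_lt (Polynomial.degree_sub_le _ _) (max_lt ?_ ?_)
      · exact lt_of_lt_of_le (deg_mul_lt'' x.2.2.2.1 y.2.2.1 hn hn)
          (by exact_mod_cast (show n + n - 1 ≤ 2 * n by omega))
      · exact lt_of_lt_of_le (deg_mul_lt'' y.2.2.2.1 x.2.2.1 hn hn)
          (by exact_mod_cast (show n + n - 1 ≤ 2 * n by omega))
    have heq0 : x.1.1 * y.1.2 - y.1.1 * x.1.2 = 0 :=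
      Polynomial.eq_zero_of_dvd_of_degree_lt hdvd hdeg
    have heq : x.1.1 * y.1.2 = y.1.1 * x.1.2 := by linear_combination heq0
    have hpp' : x.1.2 ∣ y.1.2 := by
      refine (x.2.2.2.2.symm).dvd_of_dvd_mul_right ?_
      exact ⟨y.1.1, by linear_combination heq⟩
    have hp'p : y.1.2 ∣ x.1.2 := by
      refine (y.2.2.2.2.symm).dvd_of_dvd_mul_right ?_
      exact ⟨x.1.1, by linear_combination -heq⟩
    have hp : x.1.2 = y.1.2 :=
      Polynomial.eq_of_monic_of_associated x.2.1 y.2.1 (associated_of_dvd_dvd hpp' hp'p)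
    have hr : x.1.1 = y.1.1 := by
      have hy20 : y.1.2 ≠ 0 := y.2.1.ne_zero
      apply mul_right_cancel₀ hy20
      calc (↑x : F[X] × F[X]).1 * (↑y : F[X] × F[X]).2 = (↑y : F[X] × F[X]).1 * (↑x : F[X] × F[X]).2 := heq
        _ = (↑y : F[X] × F[X]).1 * (↑y : F[X] × F[X]).2 := by rw [hp]
    exact Subtype.ext (Prod.ext hr hp)
  · -- surjective
    intro y
    obtain ⟨u, hud, r, p, hpm, hdp, hdr, hcop, hdvd⟩ := y
    refine ⟨⟨(r, p), hpm, hdp, hdr, hcop⟩, ?_⟩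
    apply Subtype.ext
    show AdjoinRoot.modByMonicHom hfm (AdjoinRoot.mk f r / AdjoinRoot.mk f p) = u
    have hp0 := hmk0 p hpm.ne_zero hdp
    have hmkr : AdjoinRoot.mk f r = AdjoinRoot.mk f u * AdjoinRoot.mk f p := by
      have h0 : AdjoinRoot.mk f (u * p - r) = 0 := AdjoinRoot.mk_eq_zero.mpr hdvd
      rw [map_sub, map_mul, sub_eq_zero] at h0
      exact h0.symm
    rw [hmkr, mul_div_cancel_right₀ _ hp0, AdjoinRoot.modByMonicHom_mk,
      (Polynomial.modByMonic_eq_self_iff hfm).mpr (by rw [hfd]; exact hud)]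

end Trinomial

def T (n : ℕ) (c : Fin (2 * n - 1) → F) : Matrix (Fin n) (Fin n) F :=
  fun i j => c ⟨n - 1 + i - j, by have := i.isLt; have := j.isLt; omega⟩

def Toep {n : ℕ} (A : Matrix (Fin n) (Fin n) F) : Prop :=
  ∀ i j r s : Fin n, (i : ℤ) - (j : ℤ) = (r : ℤ) - (s : ℤ) → A i j = A r s

def eT (n : ℕ) : (Fin (2 * n - 1) → F) ≃ {A : Matrix (Fin n) (Fin n) F // Toep A} where
  toFun c := ⟨T n c, by
    intro i j r s h
    have hi := i.isLt; have hj := j.isLt; have hr := r.isLt; have hs := s.isLt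
    apply congrArg c
    apply Fin.ext
    simp only [T]
    omega⟩
  invFun A k :=
    if h : (k : ℕ) < n then A.1 ⟨0, by omega⟩ ⟨n - 1 - k, by omega⟩
    else A.1 ⟨(k : ℕ) + 1 - n, by have := k.isLt; omega⟩ ⟨0, by have := k.isLt; omega⟩
  left_inv c := by
    funext k
    have hk := k.isLt
    dsimp only
    by_cases h : (k : ℕ) < n
    · rw [dif_pos h]
      apply congrArg c
      apply Fin.ext
      simp only [T, Fin.val_mk]
      omega
    · rw [dif_neg h]
      apply congrArg c
      apply Fin.ext
      simp only [T, Fin.val_mk]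
      omega
  right_inv A := by
    apply Subtype.ext
    funext i j
    have hi := i.isLt; have hj := j.isLt
    show dite _ _ _ = A.1 i j
    by_cases h : n - 1 + (i : ℕ) - (j : ℕ) < n
    · rw [dif_pos h]
      apply A.2
      simp only [Fin.val_mk]
      omega
    · rw [dif_neg h]
      apply A.2
      simp only [Fin.val_mk]
      omega

def uc (n : ℕ) (c : Fin (2 * n - 1) → F) : F[X] :=
  ∑ k : Fin (2 * n - 1), C (c k) * X ^ ((k : ℕ) + 1)

lemma coeff_uc (n : ℕ) (c : Fin (2 * n - 1) → F) (j : ℕ) :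
    (uc n c).coeff j = if h : 1 ≤ j ∧ j < 2 * n then c ⟨j - 1, by omega⟩ else 0 := by
  rw [uc, Polynomial.finset_sum_coeff]
  simp only [Polynomial.coeff_C_mul, Polynomial.coeff_X_pow, mul_ite, mul_one, mul_zero]
  split_ifs with h
  · rw [Finset.sum_eq_single (⟨j - 1, by omega⟩ : Fin (2 * n - 1))]
    · rw [if_pos (by simp; omega)]
    · intro k _ hk
      rw [if_neg]
      intro hjk
      exact hk (Fin.ext (by simp; omega))
    · intro hmem; exact absurd (Finset.mem_univ _) hmem
  · refine Finset.sum_eq_zero fun k _ => ?_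
    rw [if_neg]
    have := k.isLt
    intro hjk
    omega

lemma deg_uc (n : ℕ) (c : Fin (2 * n - 1) → F) :
    (uc n c).degree < ((2 * n : ℕ) : WithBot ℕ) := by
  rw [Polynomial.degree_lt_iff_coeff_zero]
  intro m hm
  rw [coeff_uc, dif_neg]
  intro hc
  have := hc.2
  have hm' : 2 * n ≤ m := by exact_mod_cast hm
  omega

def pv (n : ℕ) (v : Fin n → F) : F[X] := ∑ j : Fin n, C (v j) * X ^ (j : ℕ)

lemma coeff_pv (n : ℕ) (v : Fin n → F) (j : ℕ) :
    (pv n v).coeff j = if h : j < n then v ⟨j, h⟩ else 0 := by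
  rw [pv, Polynomial.finset_sum_coeff]
  simp only [Polynomial.coeff_C_mul, Polynomial.coeff_X_pow, mul_ite, mul_one, mul_zero]
  split_ifs with h
  · rw [Finset.sum_eq_single (⟨j, h⟩ : Fin n)]
    · rw [if_pos rfl]
    · intro k _ hk
      rw [if_neg]
      intro hjk
      exact hk (Fin.ext (by simp [hjk]))
    · intro hmem; exact absurd (Finset.mem_univ _) hmem
  · refine Finset.sum_eq_zero fun k _ => ?_
    rw [if_neg]
    have := k.isLt
    intro hjk
    omega

lemma deg_pv (n : ℕ) (v : Fin n → F) : (pv n v).degree < ((n : ℕ) : WithBot ℕ) := by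
  rw [Polynomial.degree_lt_iff_coeff_zero]
  intro m hm
  rw [coeff_pv, dif_neg]
  have hm' : n ≤ m := by exact_mod_cast hm
  omega

lemma pv_eq (n : ℕ) (p : F[X]) (hp : p.degree < ((n : ℕ) : WithBot ℕ)) :
    pv n (fun j => p.coeff j) = p := by
  apply Polynomial.ext
  intro m
  rw [coeff_pv]
  split_ifs with h
  · rfl
  · exact (Polynomial.coeff_eq_zero_of_degree_lt
      (lt_of_lt_of_le hp (by exact_mod_cast (show n ≤ m by omega)))).symm

lemma mulVec_coeff (n : ℕ) (c : Fin (2 * n - 1) → F) (v : Fin n → F) (i : Fin n) :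
    (uc n c * pv n v).coeff (n + i) = ((T n c).mulVec v) i := by
  have hi := i.isLt
  rw [Polynomial.coeff_mul, Finset.Nat.sum_antidiagonal_eq_sum_range_succ_mk]
  have hstep1 : ∑ k ∈ Finset.range (n + (i : ℕ) + 1),
      (uc n c).coeff k * (pv n v).coeff (n + (i : ℕ) - k)
      = ∑ k ∈ Finset.Ico ((i : ℕ) + 1) (n + (i : ℕ) + 1),
        (uc n c).coeff k * (pv n v).coeff (n + (i : ℕ) - k) := by
    refine (Finset.sum_subset ?_ ?_).symm
    · intro k hk
      rw [Finset.mem_Ico] at hk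
      rw [Finset.mem_range]
      omega
    · intro k hk hk2
      rw [Finset.mem_range] at hk
      rw [Finset.mem_Ico] at hk2
      rw [coeff_pv, dif_neg (by omega), mul_zero]
  rw [hstep1, Finset.sum_Ico_eq_sum_range]
  have hsize : n + (i : ℕ) + 1 - ((i : ℕ) + 1) = n := by omega
  rw [hsize]
  rw [← Finset.sum_range_reflect]
  have hmv : (T n c).mulVec v i = ∑ j : Fin n, T n c i j * v j := by
    simp [Matrix.mulVec, dotProduct]
  rw [hmv]
  rw [← Fin.sum_univ_eq_sum_range (fun j => (uc n c).coeff ((i:ℕ) + 1 + (n - 1 - j))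
    * (pv n v).coeff (n + (i:ℕ) - ((i:ℕ) + 1 + (n - 1 - j)))) n]
  refine Finset.sum_congr rfl fun j _ => ?_
  have hj := j.isLt
  rw [coeff_uc, coeff_pv, dif_pos (by omega), dif_pos (by omega)]
  congr 1
  · apply congrArg c
    apply Fin.ext
    simp only [T, Fin.val_mk]
    omega
  · apply congrArg v
    apply Fin.ext
    simp only [Fin.val_mk]
    omega

lemma det_iff_sing {n : ℕ} (hn : 0 < n) (c : Fin (2 * n - 1) → F) :
    (T n c).det = 0 ↔ Sing n (uc n c) := by
  rw [← Matrix.exists_mulVec_eq_zero_iff]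
  constructor
  · rintro ⟨v, hv0, hmv⟩
    refine ⟨pv n v, ?_, deg_pv n v, ?_⟩
    · intro hp0
      apply hv0
      funext j
      have := coeff_pv n v (j : ℕ)
      rw [hp0, Polynomial.coeff_zero, dif_pos j.isLt] at this
      simp at this ⊢
      exact this.symm
    · intro k hk1 hk2
      have hkn : k - n < n := by omega
      have : (uc n c * pv n v).coeff (n + (⟨k - n, hkn⟩ : Fin n)) = 0 := by
        rw [mulVec_coeff, hmv]; rfl
      simpa only [Fin.val_mk, show n + (k - n) = k by omega] using this
  · rintro ⟨p, hp0, hdp, hcoef⟩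
    refine ⟨fun j => p.coeff j, ?_, ?_⟩
    · intro hv0
      apply hp0
      rw [← pv_eq n p hdp]
      have : (fun j : Fin n => p.coeff j) = 0 := hv0
      rw [this]
      simp [pv]
    · funext i
      have hi := i.isLt
      rw [← mulVec_coeff n c _ i, pv_eq n p hdp]
      show (uc n c * p).coeff (n + i) = 0
      exact hcoef _ (by omega) (by omega)

lemma sing_add_C {n : ℕ} (hn : 0 < n) (u : F[X]) (d : F) (h : Sing n u) : Sing n (u + C d) := by
  obtain ⟨p, hp0, hdp, hcoef⟩ := h
  refine ⟨p, hp0, hdp, fun k hk1 hk2 => ?_⟩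
  have : (u + C d) * p = u * p + C d * p := by ring
  rw [this, Polynomial.coeff_add, hcoef k hk1 hk2, zero_add, Polynomial.coeff_C_mul,
    Polynomial.coeff_eq_zero_of_degree_lt (lt_of_lt_of_le hdp (by exact_mod_cast hk1)),
    mul_zero]

lemma sing_shift {n : ℕ} (hn : 0 < n) (u : F[X]) (d : F) : Sing n (u + C d) ↔ Sing n u := by
  constructor
  · intro h
    have := sing_add_C hn _ (-d) h
    simpa using this
  · exact sing_add_C hn u d

lemma uc_coeffs {n : ℕ} (u : F[X]) (hu : u.degree < ((2 * n : ℕ) : WithBot ℕ)) :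
    uc n (fun k => u.coeff ((k : ℕ) + 1)) = u - C (u.coeff 0) := by
  apply Polynomial.ext
  intro m
  rw [coeff_uc, Polynomial.coeff_sub, Polynomial.coeff_C]
  rcases Nat.eq_zero_or_pos m with rfl | hm
  · rw [dif_neg (by omega), if_pos rfl]; ring
  rcases lt_or_ge m (2 * n) with hm2 | hm2
  · rw [dif_pos ⟨hm, hm2⟩, if_neg (by omega)]
    simp only [Fin.val_mk, sub_zero]
    congr 1
    omega
  · rw [dif_neg (by omega), if_neg (by omega), sub_zero,
      Polynomial.coeff_eq_zero_of_degree_lt (lt_of_lt_of_le hu (by exact_mod_cast hm2))]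


section Final
variable {n : ℕ} {a b : F}

theorem card_fracset_eq (hn : 0 < n) {f : F[X]} (hf : Irreducible f) (hfm : f.Monic)
    (hfd : f.degree = ((2 * n : ℕ) : WithBot ℕ))
    (hcf : ∀ g : F[X], (f * g).degree < ((3 * n - 1 : ℕ) : WithBot ℕ) →
      ∀ k, n ≤ k → k < 2 * n → (f * g).coeff k = 0) :
    Nat.card (FracSet n f) =
      Nat.card F * Nat.card {c : Fin (2 * n - 1) → F // Sing n (uc n c)} := by
  rw [← Nat.card_prod]
  apply Nat.card_congr
  refine
    { toFun := fun u => (u.1.coeff 0, ⟨fun k => u.1.coeff ((k : ℕ) + 1), ?_⟩)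
      invFun := fun ac => ⟨C ac.1 + uc n ac.2.1, ?_, ?_⟩
      left_inv := ?_
      right_inv := ?_ }
  · have hs : Sing n u.1 := frac_to_sing hn hcf u.2.1 u.2.2
    rw [uc_coeffs u.1 u.2.1]
    have := (sing_shift hn u.1 (-(u.1.coeff 0))).mpr hs
    simpa [sub_eq_add_neg] using this
  · refine lt_of_le_of_lt (Polynomial.degree_add_le _ _) (max_lt ?_ (deg_uc n ac.2.1))
    exact lt_of_le_of_lt Polynomial.degree_C_le (by exact_mod_cast (show 0 < 2 * n by omega))
  · refine sing_to_frac hn hf hfm hfd hcf ?_ ?_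
    · refine lt_of_le_of_lt (Polynomial.degree_add_le _ _) (max_lt ?_ (deg_uc n ac.2.1))
      exact lt_of_le_of_lt Polynomial.degree_C_le (by exact_mod_cast (show 0 < 2 * n by omega))
    · rw [add_comm]
      exact sing_add_C hn _ _ ac.2.2
  · intro u
    apply Subtype.ext
    show C (u.1.coeff 0) + uc n (fun k => u.1.coeff ((k : ℕ) + 1)) = u.1
    rw [uc_coeffs u.1 u.2.1]
    ring
  · intro ac
    refine Prod.ext ?_ ?_
    · show (C ac.1 + uc n ac.2.1).coeff 0 = ac.1
      rw [Polynomial.coeff_add, Polynomial.coeff_C, if_pos rfl, coeff_uc, dif_neg (by omega),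
        add_zero]
    · apply Subtype.ext
      funext k
      show (C ac.1 + uc n ac.2.1).coeff ((k : ℕ) + 1) = ac.2.1 k
      have hk := k.isLt
      rw [Polynomial.coeff_add, Polynomial.coeff_C, if_neg (by omega), coeff_uc,
        dif_pos ⟨by omega, by omega⟩, zero_add]
      apply congrArg
      apply Fin.ext
      simp

theorem card_sing_eq (hn : 0 < n)
    (hf : Irreducible (X ^ (2 * n) - C a * X - C b : F[X])) :
    Nat.card {c : Fin (2 * n - 1) → F // Sing n (uc n c)} = Fintype.card F ^ (2 * n - 2) := by
  have hfm := f_monic (a := a) (b := b) hn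
  have hfd := f_degree (a := a) (b := b) hn
  have hcf := coeff_f_mul (a := a) (b := b) hn
  have h1 : Fintype.card F ^ (2 * n - 1) = Nat.card (Cop F n) := (card_Cop n hn).symm
  rw [frac_bijective hn hf hfm hfd, card_fracset_eq hn hf hfm hfd hcf, Nat.card_eq_fintype_card]
    at h1
  have hq : 0 < Fintype.card F := Fintype.card_pos
  apply Nat.eq_of_mul_eq_mul_left hq
  rw [← h1, ← pow_succ']
  congr 1
  omega

end Final

end
end St17

open St17 in
/-- If X^{2n} - aX - b is irreducible over F_q for some a,b, then the
number of nonsingular n×n Toeplitz matrices over F_q is q^{2n-1} - q^{2n-2}. -/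
theorem stmt_17 (F : Type*) [Field F] [Fintype F] (q : ℕ) (hq : q = Fintype.card F)
    (n : ℕ) (hn : 0 < n)
    (h : ∃ a b : F, Irreducible (X ^ (2 * n) - C a * X - C b)) :
    Nat.card {A : Matrix (Fin n) (Fin n) F //
        (∀ i j r s : Fin n, (i : ℤ) - (j : ℤ) = (r : ℤ) - (s : ℤ) → A i j = A r s) ∧
        IsUnit A} =
      q ^ (2 * n - 1) - q ^ (2 * n - 2) := by
  classical
  obtain ⟨a, b, hf⟩ := h
  subst hq
  have e1 : {A : Matrix (Fin n) (Fin n) F // Toep A ∧ IsUnit A}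
      ≃ {c : Fin (2 * n - 1) → F // IsUnit (T n c)} :=
    (Equiv.subtypeSubtypeEquivSubtypeInter Toep IsUnit).symm.trans
      ((Equiv.subtypeEquiv (eT n)
        (fun c => (Iff.rfl : IsUnit (T n c) ↔ IsUnit ((eT n c) : Matrix (Fin n) (Fin n) F)))).symm)
  have e0 : {A : Matrix (Fin n) (Fin n) F //
      (∀ i j r s : Fin n, (i : ℤ) - (j : ℤ) = (r : ℤ) - (s : ℤ) → A i j = A r s) ∧ IsUnit A}
      = {A : Matrix (Fin n) (Fin n) F // Toep A ∧ IsUnit A} := rfl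
  rw [e0, Nat.card_congr e1]
  have hiff : ∀ c : Fin (2 * n - 1) → F, (¬ IsUnit (T n c)) ↔ Sing n (uc n c) := by
    intro c
    rw [Matrix.isUnit_iff_isUnit_det, isUnit_iff_ne_zero, not_not]
    exact det_iff_sing hn c
  have h2 : Nat.card {c : Fin (2 * n - 1) → F // ¬ IsUnit (T n c)}
      = Fintype.card F ^ (2 * n - 2) := by
    rw [Nat.card_congr (Equiv.subtypeEquivRight hiff)]
    exact card_sing_eq hn hf
  have h3 : Nat.card {c : Fin (2 * n - 1) → F // IsUnit (T n c)}
      = Fintype.card F ^ (2 * n - 1) -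
        Nat.card {c : Fin (2 * n - 1) → F // ¬ IsUnit (T n c)} := by
    rw [Nat.card_eq_fintype_card, Nat.card_eq_fintype_card]
    have := Fintype.card_subtype_compl (fun c : Fin (2 * n - 1) → F => ¬ IsUnit (T n c))
    rw [Fintype.card_fun, Fintype.card_fin] at this
    rw [← this]
    apply Fintype.card_congr
    exact Equiv.subtypeEquivRight (fun c => (not_not).symm)
  rw [h3, h2]
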